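/- arXiv:1703.08517 — 3 statements merged into one kernel-verified Lean document; each statement's English description precedes it below -/
import Mathlib

section
/- Let f : M^m → Q^n_ε × ℝ be a biconservative isometric immersion with nonzero parallel mean curvature vector field H, and suppose T and η are nowhere vanishing. Then A_H T = 0, i.e., T lies in the kernel E_0(H) of the shape operator in direction H. -/
open scoped BigOperators

/-! Abstract model of an isometric immersion `f : M^m → Q^n_ε × ℝ ⊂ E^{n+2}`,
where `Q^n_ε` is the unit sphere (`ε = 1`) or hyperbolic space (`ε = -1`) and
`E^{n+2}` is Euclidean or Lorentzian space.  Here `R` plays the role of the ring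
of smooth functions on `M`, `TM` of the tangent vector fields of `M`, `NM` of
the normal vector fields along `f` (normal inside `T(Q^n_ε × ℝ)`), and `AM` of
the vector fields along `f` with values in `E^{n+2}`. -/

/-- The curvature tensor of the product `Q^n_ε × ℝ`:
`R̃(Z,W)V = ε (⟨W',V'⟩ Z' - ⟨Z',V'⟩ W')`, where `Z' = Z - ⟨Z,∂t⟩ ∂t` is the
component of `Z` tangent to the `Q^n_ε`-factor. -/
def prodCurv {R AM : Type*} [CommRing R] [Algebra ℝ R] [AddCommGroup AM] [Module R AM]
    (ε : ℝ) (g : AM →ₗ[R] AM →ₗ[R] R) (dt : AM) (Z W V : AM) : AM :=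
  algebraMap ℝ R ε •
    ((g W V - g W dt * g V dt) • (Z - g Z dt • dt)
      - (g Z V - g Z dt * g V dt) • (W - g W dt • dt))

structure Setup (ε : ℝ) (m : ℕ) (R : Type*) [CommRing R] [Algebra ℝ R]
    (TM NM AM : Type*) [AddCommGroup TM] [Module R TM]
    [AddCommGroup NM] [Module R NM] [AddCommGroup AM] [Module R AM] : Type _ where
  /-- the differential of `f` -/
  ι : TM →ₗ[R] AM
  /-- the inclusion of the normal bundle -/
  ν : NM →ₗ[R] AM
  /-- tangential projection -/
  tanPr : AM →ₗ[R] TM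
  /-- normal projection -/
  norPr : AM →ₗ[R] NM
  split : ∀ Z, ι (tanPr Z) + ν (norPr Z) = Z
  tan_ι : ∀ X, tanPr (ι X) = X
  nor_ν : ∀ ξ, norPr (ν ξ) = ξ
  nor_ι : ∀ X, norPr (ι X) = 0
  tan_ν : ∀ ξ, tanPr (ν ξ) = 0
  /-- the (possibly Lorentzian) metric of `E^{n+2}` along `f` -/
  g : AM →ₗ[R] AM →ₗ[R] R
  g_symm : ∀ Z W, g Z W = g W Z
  g_tan_nor : ∀ X ξ, g (ι X) (ν ξ) = 0
  /-- the action of a tangent vector field on a function -/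
  act : TM → R → R
  act_add : ∀ X a b, act X (a + b) = act X a + act X b
  act_mul : ∀ X a b, act X (a * b) = a * act X b + b * act X a
  act_const : ∀ X (r : ℝ), act X (algebraMap ℝ R r) = 0
  /-- the Lie bracket of vector fields on `M` -/
  bracket : TM → TM → TM
  /-- the Levi-Civita connection of `Q^n_ε × ℝ` along `f` -/
  D : TM → AM → AM
  D_add : ∀ X Z W, D X (Z + W) = D X Z + D X W
  D_smul : ∀ X (a : R) Z, D X (a • Z) = act X a • Z + a • D X Z
  /-- the Levi-Civita connection of `M` -/
  conn : TM → TM → TM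
  conn_add : ∀ X Y Z, conn X (Y + Z) = conn X Y + conn X Z
  conn_smul : ∀ X (a : R) Y, conn X (a • Y) = act X a • Y + a • conn X Y
  /-- the normal connection `∇^⊥` -/
  nconn : TM → NM → NM
  nconn_add : ∀ X ξ ζ, nconn X (ξ + ζ) = nconn X ξ + nconn X ζ
  nconn_smul : ∀ X (a : R) ξ, nconn X (a • ξ) = act X a • ξ + a • nconn X ξ
  /-- the second fundamental form `α_f` -/
  alpha : TM →ₗ[R] TM →ₗ[R] NM
  alpha_symm : ∀ X Y, alpha X Y = alpha Y X
  /-- the shape operators `A_ξ` -/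
  A : NM →ₗ[R] TM →ₗ[R] TM
  shape : ∀ ξ X Y, g (ι (A ξ X)) (ι Y) = g (ν (alpha X Y)) (ν ξ)
  /-- the Gauss formula -/
  gauss : ∀ X Y, D X (ι Y) = ι (conn X Y) + ν (alpha X Y)
  /-- the Weingarten formula -/
  weingarten : ∀ X ξ, D X (ν ξ) = - ι (A ξ X) + ν (nconn X ξ)
  metric : ∀ X Z W, act X (g Z W) = g (D X Z) W + g Z (D X W)
  torsion : ∀ X Y, conn X Y - conn Y X = bracket X Y
  /-- the Codazzi equation in `Q^n_ε × ℝ` -/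
  codazzi : ∀ X Y Z,
    (nconn X (alpha Y Z) - alpha (conn X Y) Z - alpha Y (conn X Z))
      - (nconn Y (alpha X Z) - alpha (conn Y X) Z - alpha X (conn Y Z))
      = norPr (prodCurv ε g dt (ι X) (ι Y) (ι Z))
  /-- the Ricci equation in `Q^n_ε × ℝ` -/
  ricci : ∀ X Y ξ,
    nconn X (nconn Y ξ) - nconn Y (nconn X ξ) - nconn (bracket X Y) ξ
      = norPr (prodCurv ε g dt (ι X) (ι Y) (ν ξ))
        + alpha X (A ξ Y) - alpha (A ξ X) Y
  /-- the unit vector field tangent to the `ℝ`-factor -/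
  dt : AM
  dt_parallel : ∀ X, D X dt = 0
  dt_unit : g dt dt = 1
  /-- the position vector field, i.e. `f` itself, regarded in `E^{n+2}` -/
  pos : AM
  /-- the flat connection `∇̂` of `E^{n+2}` along `f` -/
  Dhat : TM → AM → AM
  Dhat_add : ∀ X Z W, Dhat X (Z + W) = Dhat X Z + Dhat X W
  Dhat_smul : ∀ X (a : R) Z, Dhat X (a • Z) = act X a • Z + a • Dhat X Z
  Dhat_pos : ∀ X, Dhat X pos = ι X
  Dhat_dt : ∀ X, Dhat X dt = 0
  Dhat_metric : ∀ X Z W, act X (g Z W) = g (Dhat X Z) W + g Z (Dhat X W)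
  /-- relation between `∇̂` and the connection of `Q^n_ε × ℝ` via the second
  fundamental form of the inclusion `Q^n_ε × ℝ ⊂ E^{n+2}` -/
  Dhat_ι : ∀ X Y, Dhat X (ι Y) = D X (ι Y)
    - (algebraMap ℝ R ε * (g (ι X) (ι Y) - g (ι X) dt * g (ι Y) dt)) •
        (pos - g pos dt • dt)
  Dhat_ν : ∀ X ξ, Dhat X (ν ξ) = D X (ν ξ)
    - (algebraMap ℝ R ε * (g (ι X) (ν ξ) - g (ι X) dt * g (ν ξ) dt)) •
        (pos - g pos dt • dt)
  /-- `f` takes values in `Q^n_ε × ℝ` -/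
  pos_norm : g (pos - g pos dt • dt) (pos - g pos dt • dt) = algebraMap ℝ R ε

namespace Setup

variable {ε : ℝ} {m : ℕ} {R TM NM AM : Type*} [CommRing R] [Algebra ℝ R]
  [AddCommGroup TM] [Module R TM] [AddCommGroup NM] [Module R NM]
  [AddCommGroup AM] [Module R AM]

variable (S : Setup ε m R TM NM AM)

/-- the tangent part `T` of `∂t`, so that `∂t = f_* T + η` -/
def T : TM := S.tanPr S.dt

/-- the normal part `η` of `∂t`, so that `∂t = f_* T + η` -/
def eta : NM := S.norPr S.dt

/-- the induced metric on `M` -/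
def gT (X Y : TM) : R := S.g (S.ι X) (S.ι Y)

/-- the metric of the normal bundle -/
def gN (ξ ζ : NM) : R := S.g (S.ν ξ) (S.ν ζ)

/-- the curvature tensor `R̃` of `Q^n_ε × ℝ` along `f` -/
def Rcurv (Z W V : AM) : AM := prodCurv ε S.g S.dt Z W V

/-- `e` is a (local) orthonormal tangent frame of `M` -/
def IsONFrame (e : Fin m → TM) : Prop :=
  (∀ i j, S.gT (e i) (e j) = if i = j then 1 else 0) ∧
  (∀ X : TM, X = ∑ i, S.gT X (e i) • e i)

/-- `H` is the mean curvature vector field: `m H = trace α_f` -/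
def IsMeanCurv (e : Fin m → TM) (H : NM) : Prop :=
  (m : R) • H = ∑ i, S.alpha (e i) (e i)

/-- `H` is parallel in the normal bundle -/
def IsParallelN (H : NM) : Prop := ∀ X, S.nconn X H = 0

/-- `f` is biconservative: the tangent part of the bitension field vanishes,
i.e. `m grad‖H‖² + 4 trace A_{∇^⊥H} + 4 trace (R̃(·,H)·)^T = 0` (paired with an
arbitrary tangent field `Y`, which expresses the gradient term weakly). -/
def Biconservative (e : Fin m → TM) (H : NM) : Prop :=
  ∀ Y : TM,
    (m : R) * S.act Y (S.gN H H)
      + 4 * (∑ i, S.gT (S.A (S.nconn (e i) H) (e i)) Y)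
      + 4 * (∑ i, S.gT (S.tanPr (S.Rcurv (S.ι (e i)) (S.ν H) (S.ι (e i)))) Y) = 0

/-- the normal part of the bitension field vanishes:
`trace α_f(A_H ·, ·) - Δ^⊥ H + 2 trace (R̃(·,H)·)^⊥ = 0` -/
def NormalBitensionZero (e : Fin m → TM) (H : NM) : Prop :=
  (∑ i, S.alpha (S.A H (e i)) (e i))
    - (∑ i, (S.nconn (e i) (S.nconn (e i) H) - S.nconn (S.conn (e i) (e i)) H))
    + 2 • (∑ i, S.norPr (S.Rcurv (S.ι (e i)) (S.ν H) (S.ι (e i)))) = 0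

/-- `f` is biharmonic: the full bitension field vanishes. -/
def Biharmonic (e : Fin m → TM) (H : NM) : Prop :=
  S.Biconservative e H ∧ S.NormalBitensionZero e H

/-- a vector field is nowhere vanishing (in the function-ring model: it is not
annihilated by any nonzero function) -/
def NowhereZero (_S₀ : Setup ε m R TM NM AM) (X : TM) : Prop :=
  ∀ a : R, a • X = 0 → a = 0

/-- a normal field is nowhere vanishing -/
def NowhereZeroN (_S₀ : Setup ε m R TM NM AM) (ξ : NM) : Prop :=
  ∀ a : R, a • ξ = 0 → a = 0

/-- `f` belongs to the class `𝒜`: `T` is an eigenvector of every shape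
operator of `f` -/
def ClassA : Prop := ∀ ξ : NM, ∃ r : R, S.A ξ S.T = r • S.T

end Setup


section AuxLemmas

variable {ε : ℝ} {m : ℕ} {R TM NM AM : Type*} [CommRing R] [Algebra ℝ R]
  [AddCommGroup TM] [Module R TM] [AddCommGroup NM] [Module R NM]
  [AddCommGroup AM] [Module R AM]

lemma aux_cancel {r : ℝ} (hr : r ≠ 0) {a : R} (h : algebraMap ℝ R r * a = 0) :
    a = 0 := by
  have h2 := congrArg (fun z => algebraMap ℝ R r⁻¹ * z) h
  simp only [mul_zero] at h2
  rwa [← mul_assoc, ← map_mul, inv_mul_cancel₀ hr, map_one, one_mul] at h2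

variable (S : Setup ε m R TM NM AM)

lemma act_zero' (X : TM) : S.act X 0 = 0 := by
  have h := S.act_const X 0
  rwa [map_zero] at h

lemma tanPr_dt : S.tanPr S.dt = S.T := rfl

lemma dt_eq : S.dt = S.ι S.T + S.ν S.eta := (S.split S.dt).symm

lemma g_nor_tan (ξ : NM) (X : TM) : S.g (S.ν ξ) (S.ι X) = 0 := by
  rw [S.g_symm]; exact S.g_tan_nor X ξ

lemma g_ι_dt (X : TM) : S.g (S.ι X) S.dt = S.g (S.ι X) (S.ι S.T) := by
  rw [dt_eq, map_add, S.g_tan_nor, add_zero]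

lemma g_ν_dt (ξ : NM) : S.g (S.ν ξ) S.dt = S.g (S.ν ξ) (S.ν S.eta) := by
  rw [dt_eq, map_add, g_nor_tan, zero_add]

lemma shape_symm (ξ : NM) (X Y : TM) :
    S.g (S.ι (S.A ξ X)) (S.ι Y) = S.g (S.ι (S.A ξ Y)) (S.ι X) := by
  rw [S.shape, S.shape, S.alpha_symm]

/-- Once `⟨νH, ∂t⟩ = 0` is known, differentiating it gives `A_H T = 0`. -/
lemma key_lemma (e : Fin m → TM) (H : NM) (he : S.IsONFrame e)
    (hpar : S.IsParallelN H) (h0 : S.g (S.ν H) S.dt = 0) :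
    S.A H S.T = 0 := by
  have hAX : ∀ X : TM, S.g (S.ι (S.A H X)) (S.ι S.T) = 0 := by
    intro X
    have hm := S.metric X (S.ν H) S.dt
    rw [h0, act_zero', S.dt_parallel, S.weingarten, hpar X] at hm
    simp only [map_zero, map_add, map_neg, LinearMap.add_apply, LinearMap.neg_apply,
      LinearMap.zero_apply, add_zero] at hm
    rw [← g_ι_dt]
    linear_combination hm
  have hexp := he.2 (S.A H S.T)
  rw [hexp]
  refine Finset.sum_eq_zero fun i _ => ?_
  have hz : S.gT (S.A H S.T) (e i) = 0 := by
    show S.g (S.ι (S.A H S.T)) (S.ι (e i)) = 0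
    rw [shape_symm]
    exact hAX (e i)
  rw [hz, zero_smul]

end AuxLemmas

/-- The symmetric bilinear form of `E⁶` (Euclidean for `ε = 1`, Lorentzian for
`ε = -1`), the last coordinate corresponding to the `ℝ`-factor of `Q⁴_ε × ℝ`. -/
def bform (ε : ℝ) (v w : Fin 6 → ℝ) : ℝ :=
  v 0 * w 0 + v 1 * w 1 + v 2 * w 2 + v 3 * w 3 + ε * (v 4 * w 4) + v 5 * w 5


/-- If `f` is biconservative with nonzero parallel `H` and `T`, `η` are nowhere
vanishing, then `A_H T = 0`, i.e. `T ∈ E_0(H)`. -/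
theorem stmt_4 {ε : ℝ} (hε : ε = 1 ∨ ε = -1) {m : ℕ} {R TM NM AM : Type*}
    [CommRing R] [Algebra ℝ R] [AddCommGroup TM] [Module R TM]
    [AddCommGroup NM] [Module R NM] [AddCommGroup AM] [Module R AM]
    (S : Setup ε m R TM NM AM)
    (e : Fin m → TM) (H : NM) (he : S.IsONFrame e) (hH : S.IsMeanCurv e H)
    (hpar : S.IsParallelN H) (hH0 : H ≠ 0)
    (hbic : S.Biconservative e H) (hT : S.NowhereZero S.T)
    (heta : S.NowhereZeroN S.eta) :
    S.A H S.T = 0 := by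
  classical
  have hε0 : ε ≠ 0 := by rcases hε with h | h <;> rw [h] <;> norm_num
  have ho : ∀ i, S.g (S.ι (e i)) (S.ι (e i)) = 1 := by
    intro i
    have h := he.1 i i
    simp only [if_pos rfl] at h
    exact h
  by_cases hm1 : m = 1
  · -- the case m = 1 : use the position vector field
    subst hm1
    have hDhatP : ∀ X : TM, S.Dhat X (S.pos - S.g S.pos S.dt • S.dt)
        = S.ι X - S.g (S.ι X) S.dt • S.dt := by
      intro X
      have hs : S.act X (S.g S.pos S.dt) = S.g (S.ι X) S.dt := by
        have h := S.Dhat_metric X S.pos S.dt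
        rw [S.Dhat_pos, S.Dhat_dt] at h
        simpa using h
      have hadd := S.Dhat_add X (S.pos - S.g S.pos S.dt • S.dt) (S.g S.pos S.dt • S.dt)
      rw [sub_add_cancel, S.Dhat_pos, S.Dhat_smul, S.Dhat_dt, smul_zero, add_zero, hs] at hadd
      exact (eq_sub_of_add_eq hadd.symm)
    have hdtP : S.g S.dt (S.pos - S.g S.pos S.dt • S.dt) = 0 := by
      rw [map_sub, map_smul, S.g_symm S.dt S.pos]
      simp [S.dt_unit, smul_eq_mul]
    have hP0 : ∀ X : TM, S.g (S.ι X) (S.pos - S.g S.pos S.dt • S.dt) = 0 := by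
      intro X
      have h := S.Dhat_metric X (S.pos - S.g S.pos S.dt • S.dt)
        (S.pos - S.g S.pos S.dt • S.dt)
      rw [S.pos_norm, S.act_const, hDhatP] at h
      simp only [map_sub, map_smul, LinearMap.sub_apply, LinearMap.smul_apply,
        smul_eq_mul, S.dt_unit, S.g_symm S.dt S.pos, S.g_symm S.pos (S.ι X),
        S.g_symm S.dt (S.ι X)] at h
      have h2 : algebraMap ℝ R 2 * S.g (S.ι X) (S.pos - S.g S.pos S.dt • S.dt) = 0 := by
        rw [map_ofNat]
        simp only [map_sub, map_smul, smul_eq_mul]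
        linear_combination -h
      exact aux_cancel two_ne_zero h2
    have hq : S.g (S.pos - S.g S.pos S.dt • S.dt)
        (S.ν (S.norPr (S.pos - S.g S.pos S.dt • S.dt))) = algebraMap ℝ R ε := by
      have hsplit := S.split (S.pos - S.g S.pos S.dt • S.dt)
      have hgg := congrArg (fun z => S.g (S.pos - S.g S.pos S.dt • S.dt) z) hsplit
      simp only [map_add] at hgg
      rw [S.pos_norm] at hgg
      have hz : S.g (S.pos - S.g S.pos S.dt • S.dt)
          (S.ι (S.tanPr (S.pos - S.g S.pos S.dt • S.dt))) = 0 := by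
        rw [S.g_symm]; exact hP0 _
      rw [hz, zero_add] at hgg
      exact hgg
    have hε2 : (algebraMap ℝ R ε) * (algebraMap ℝ R ε) = 1 := by
      rw [← map_mul]
      rcases hε with h | h <;> rw [h] <;> norm_num
    obtain ⟨P, hPP⟩ : ∃ P', S.pos - S.g S.pos S.dt • S.dt = P' := ⟨_, rfl⟩
    rw [hPP] at hP0 hq
    obtain ⟨q, hqq⟩ : ∃ q', S.norPr P = q' := ⟨_, rfl⟩
    rw [hqq] at hq
    have ht2 : S.g (S.ι (e 0)) S.dt * S.g (S.ι (e 0)) S.dt = 1 := by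
      have m1 := S.metric (e 0) (S.ι (e 0)) (S.ν q)
      have m2 := S.Dhat_metric (e 0) (S.ι (e 0)) (S.ν q)
      rw [S.Dhat_ι, S.Dhat_ν, hPP] at m2
      simp only [map_sub, map_smul, LinearMap.sub_apply, LinearMap.smul_apply,
        smul_eq_mul] at m2
      have hcomb := m1.symm.trans m2
      rw [hP0 (e 0), ho 0, hq] at hcomb
      have key : (1 - S.g (S.ι (e 0)) S.dt * S.g (S.ι (e 0)) S.dt)
          * ((algebraMap ℝ R ε) * (algebraMap ℝ R ε)) = 0 := by
        linear_combination hcomb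
      rw [hε2, mul_one] at key
      linear_combination -key
    have hc : S.g (S.ι (S.conn (e 0) (e 0))) (S.ι (e 0)) = 0 := by
      have h := S.metric (e 0) (S.ι (e 0)) (S.ι (e 0))
      rw [S.gauss, ho 0, show (1:R) = algebraMap ℝ R 1 from (map_one _).symm,
        S.act_const] at h
      simp only [map_add, LinearMap.add_apply, g_nor_tan, S.g_tan_nor, add_zero,
        zero_add] at h
      rw [S.g_symm (S.ι (e 0))] at h
      have h2 : algebraMap ℝ R 2 * S.g (S.ι (S.conn (e 0) (e 0))) (S.ι (e 0)) = 0 := by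
        have hm2 : (algebraMap ℝ R) 2 = 2 := map_ofNat _ 2
        rw [hm2]
        linear_combination -h
      exact aux_cancel two_ne_zero h2
    have hconn : S.conn (e 0) (e 0) = 0 := by
      have h := he.2 (S.conn (e 0) (e 0))
      rw [Fin.sum_univ_one] at h
      rw [h, show S.gT (S.conn (e 0) (e 0)) (e 0) = 0 from hc, zero_smul]
    have hH1 : S.alpha (e 0) (e 0) = H := by
      have h : ((1:ℕ):R) • H = ∑ i : Fin 1, S.alpha (e i) (e i) := hH
      rw [Fin.sum_univ_one, Nat.cast_one, one_smul] at h
      exact h.symm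
    have hact_t : S.act (e 0) (S.g (S.ι (e 0)) S.dt) = S.g (S.ν H) S.dt := by
      have h := S.metric (e 0) (S.ι (e 0)) S.dt
      rw [S.gauss, S.dt_parallel, hconn, hH1] at h
      simp only [map_zero, map_add, LinearMap.add_apply, LinearMap.zero_apply,
        zero_add, add_zero] at h
      exact h
    have hv0 : S.g (S.ν H) S.dt = 0 := by
      have h := S.act_mul (e 0) (S.g (S.ι (e 0)) S.dt) (S.g (S.ι (e 0)) S.dt)
      rw [ht2, show (1:R) = algebraMap ℝ R 1 from (map_one _).symm, S.act_const,
        hact_t] at h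
      have hth : algebraMap ℝ R 2 * (S.g (S.ι (e 0)) S.dt * S.g (S.ν H) S.dt) = 0 := by
        have hm2 : (algebraMap ℝ R) 2 = 2 := map_ofNat _ 2
        rw [hm2]
        linear_combination -h
      have h5 := aux_cancel two_ne_zero hth
      calc S.g (S.ν H) S.dt
          = S.g (S.ι (e 0)) S.dt * S.g (S.ι (e 0)) S.dt * S.g (S.ν H) S.dt := by
            rw [ht2, one_mul]
        _ = S.g (S.ι (e 0)) S.dt * (S.g (S.ι (e 0)) S.dt * S.g (S.ν H) S.dt) := by ring
        _ = 0 := by rw [h5, mul_zero]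
    exact key_lemma S e H he hpar hv0
  · -- the case m ≠ 1 : use biconservativity
    have step1 : ∀ Y : TM, S.act Y (S.gN H H) = 0 := by
      intro Y
      have h := S.metric Y (S.ν H) (S.ν H)
      rw [S.weingarten, hpar Y] at h
      show S.act Y (S.g (S.ν H) (S.ν H)) = 0
      rw [h]
      simp only [map_zero, map_add, map_neg, LinearMap.add_apply, LinearMap.neg_apply,
        LinearMap.zero_apply, S.g_tan_nor, g_nor_tan, add_zero, neg_zero, zero_add]
    have step2 : ∀ Y : TM, (∑ i, S.gT (S.A (S.nconn (e i) H) (e i)) Y) = 0 := by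
      intro Y
      refine Finset.sum_eq_zero fun i _ => ?_
      rw [hpar (e i)]
      show S.g (S.ι ((S.A 0) (e i))) (S.ι Y) = 0
      rw [map_zero]
      simp only [LinearMap.zero_apply, map_zero]
    have hRi : ∀ i, S.tanPr (S.Rcurv (S.ι (e i)) (S.ν H) (S.ι (e i)))
        = (algebraMap ℝ R ε * S.g (S.ν H) S.dt) • S.T
          - (algebraMap ℝ R ε * (S.g (S.ν H) S.dt * S.g (S.ι (e i)) S.dt)) • e i := by
      intro i
      have hz : S.g (S.ν H) (S.ι (e i)) = 0 := g_nor_tan S H (e i)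
      show S.tanPr (prodCurv ε S.g S.dt (S.ι (e i)) (S.ν H) (S.ι (e i))) = _
      unfold prodCurv
      simp only [map_smul, map_sub, S.tan_ι, S.tan_ν, tanPr_dt, hz, ho i]
      module
    have hexpand : ∀ Y : TM, S.g (S.ι S.T) (S.ι Y)
        = ∑ i, S.gT S.T (e i) * S.g (S.ι (e i)) (S.ι Y) := by
      intro Y
      conv_lhs => rw [he.2 S.T]
      simp only [map_sum, map_smul, LinearMap.sum_apply, LinearMap.smul_apply,
        smul_eq_mul]
    have hsum3 : ∀ Y : TM,
        (∑ i, S.gT (S.tanPr (S.Rcurv (S.ι (e i)) (S.ν H) (S.ι (e i)))) Y)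
        = algebraMap ℝ R ε * S.g (S.ν H) S.dt * (((m:R) - 1) * S.g (S.ι S.T) (S.ι Y)) := by
      intro Y
      have h1 : ∀ i, S.gT (S.tanPr (S.Rcurv (S.ι (e i)) (S.ν H) (S.ι (e i)))) Y
          = algebraMap ℝ R ε * S.g (S.ν H) S.dt * S.g (S.ι S.T) (S.ι Y)
            - algebraMap ℝ R ε * S.g (S.ν H) S.dt
              * (S.gT S.T (e i) * S.g (S.ι (e i)) (S.ι Y)) := by
        intro i
        have ht : S.g (S.ι (e i)) S.dt = S.gT S.T (e i) := by
          rw [g_ι_dt]; exact S.g_symm _ _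
        show S.g (S.ι (S.tanPr (S.Rcurv (S.ι (e i)) (S.ν H) (S.ι (e i))))) (S.ι Y) = _
        rw [hRi i]
        simp only [map_sub, map_smul, LinearMap.sub_apply, LinearMap.smul_apply,
          smul_eq_mul, ht]
        ring
      rw [Finset.sum_congr rfl fun i _ => h1 i, Finset.sum_sub_distrib,
        Finset.sum_const, Finset.card_univ, Fintype.card_fin, ← Finset.mul_sum,
        ← hexpand Y, nsmul_eq_mul]
      ring
    have hbic' : ∀ Y : TM,
        (4 * (algebraMap ℝ R ε * S.g (S.ν H) S.dt * ((m:R) - 1)))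
          * S.g (S.ι S.T) (S.ι Y) = 0 := by
      intro Y
      have hb := hbic Y
      rw [step1 Y, step2 Y, hsum3 Y] at hb
      linear_combination hb
    have hcT : (4 * (algebraMap ℝ R ε * S.g (S.ν H) S.dt * ((m:R) - 1))) • S.T = 0 := by
      conv_lhs => rw [he.2 S.T]
      rw [Finset.smul_sum]
      refine Finset.sum_eq_zero fun j _ => ?_
      rw [smul_smul,
        show (4 * (algebraMap ℝ R ε * S.g (S.ν H) S.dt * ((m:R) - 1)))
          * S.gT S.T (e j) = 0 from hbic' (e j), zero_smul]
    have h4 := hT _ hcT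
    have hmR : (4:ℝ) * ε * ((m:ℝ) - 1) ≠ 0 := by
      refine mul_ne_zero (mul_ne_zero (by norm_num) hε0) ?_
      rw [sub_ne_zero]
      intro h
      exact hm1 (by exact_mod_cast h)
    have hv0 : S.g (S.ν H) S.dt = 0 := by
      apply aux_cancel hmR
      rw [map_mul, map_mul, map_sub, map_one, map_natCast]
      have h4R : (algebraMap ℝ R) 4 = 4 := map_ofNat _ 4
      rw [h4R]
      linear_combination h4
    exact key_lemma S e H he hpar hv0
end

section
/- In the codimension-2 biconservative setting with nonzero parallel mean curvature, if the kernel E_0(H) of A_H is one-dimensional (hence E_0(H) = span{T}), then f belongs to class 𝒜, i.e., T is an eigenvector of every shape operator of f. -/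
open scoped BigOperators

/-- In the codimension-2 biconservative setting with nonzero parallel mean
curvature, if `E_0(H)` is one-dimensional (hence spanned by `T`), then `f`
belongs to the class `𝒜`. -/
theorem stmt_8 {ε : ℝ} (hε : ε = 1 ∨ ε = -1) {n : ℕ} {R TM NM AM : Type*}
    [CommRing R] [Algebra ℝ R] [AddCommGroup TM] [Module R TM]
    [AddCommGroup NM] [Module R NM] [AddCommGroup AM] [Module R AM]
    (S : Setup ε n R TM NM AM)
    (e : Fin n → TM) (H : NM) (he : S.IsONFrame e) (hH : S.IsMeanCurv e H)
    (hpar : S.IsParallelN H) (hH0 : H ≠ 0)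
    (hbic : S.Biconservative e H) (heta : S.NowhereZeroN S.eta)
    (hT : S.NowhereZero S.T)
    (ξ₁ ξ₂ : NM) (nH nE : R) (hu1 : S.gN ξ₁ ξ₁ = 1) (hH1 : H = nH • ξ₁)
    (hu2 : S.gN ξ₂ ξ₂ = 1) (hetadec : S.eta = nE • ξ₂)
    (hspan : ∀ ζ : NM, ∃ r s : R, ζ = r • ξ₁ + s • ξ₂)
    (hE0 : ∀ X : TM, S.A H X = 0 → ∃ r : R, X = r • S.T) :
    S.ClassA := by
  classical
  intro ξ
  by_cases hn1 : n = 1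
  · -- dimension one: trivial
    subst hn1
    have hexp : ∀ X : TM, X = S.gT X (e 0) • e 0 := by
      intro X
      have h := he.2 X
      simpa [Fin.sum_univ_one] using h
    refine ⟨S.gT (S.A ξ (e 0)) (e 0), ?_⟩
    have hT' := hexp S.T
    calc S.A ξ S.T = S.A ξ (S.gT S.T (e 0) • e 0) := by rw [← hT']
      _ = S.gT S.T (e 0) • S.A ξ (e 0) := map_smul _ _ _
      _ = S.gT S.T (e 0) • (S.gT (S.A ξ (e 0)) (e 0) • e 0) := by
            rw [← hexp (S.A ξ (e 0))]
      _ = S.gT (S.A ξ (e 0)) (e 0) • S.T := by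
            rw [smul_smul, mul_comm, ← smul_smul, ← hT']
  · -- main case
    have act_zero : ∀ X : TM, S.act X 0 = 0 := by
      intro X
      have h := S.act_add X 0 0
      rw [add_zero] at h
      exact (left_eq_add.mp h)
    have nconn_zero : ∀ X : TM, S.nconn X (0 : NM) = 0 := by
      intro X
      have h := S.nconn_add X 0 0
      rw [add_zero] at h
      exact (left_eq_add.mp h)
    have gT_symm : ∀ X Y, S.gT X Y = S.gT Y X := fun X Y => S.g_symm _ _
    have gN_symm : ∀ ζ₁ ζ₂, S.gN ζ₁ ζ₂ = S.gN ζ₂ ζ₁ := fun _ _ => S.g_symm _ _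
    have g_ν_ι : ∀ ζ X, S.g (S.ν ζ) (S.ι X) = 0 := fun ζ X => by
      rw [S.g_symm]; exact S.g_tan_nor X ζ
    have hdt : S.dt = S.ι S.T + S.ν S.eta := (S.split S.dt).symm
    have g_ι_dt : ∀ X, S.g (S.ι X) S.dt = S.gT X S.T := by
      intro X
      rw [hdt]
      simp [Setup.gT, S.g_tan_nor]
    have g_ν_dt : ∀ ζ, S.g (S.ν ζ) S.dt = S.gN ζ S.eta := by
      intro ζ
      rw [hdt]
      simp [Setup.gN, g_ν_ι]
    have gN_metric : ∀ (X : TM) ζ₁ ζ₂, S.act X (S.gN ζ₁ ζ₂)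
        = S.gN (S.nconn X ζ₁) ζ₂ + S.gN ζ₁ (S.nconn X ζ₂) := by
      intro X ζ₁ ζ₂
      have h := S.metric X (S.ν ζ₁) (S.ν ζ₂)
      rw [S.weingarten, S.weingarten] at h
      simpa [Setup.gN, S.g_tan_nor, g_ν_ι] using h
    have nconn_eta : ∀ X : TM, S.nconn X S.eta = - S.alpha X S.T := by
      intro X
      have h0 : S.D X S.dt = 0 := S.dt_parallel X
      rw [hdt, S.D_add, S.gauss, S.weingarten] at h0
      have h1 := congrArg S.norPr h0
      simp only [map_add, map_neg, map_zero, S.nor_ι, S.nor_ν, zero_add, add_zero,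
        neg_zero] at h1
      -- h1 : S.alpha X S.T + S.nconn X S.eta = 0
      have h2 : S.alpha X S.T + S.nconn X S.eta = 0 := h1
      linear_combination (norm := abel) h2
    have hHH : ∀ Y : TM, S.act Y (S.gN H H) = 0 := by
      intro Y
      rw [gN_metric Y H H, hpar]
      simp [Setup.gN]
    have hTexp : S.T = ∑ i, S.gT S.T (e i) • e i := he.2 S.T
    have hTsum : ∀ Y, S.gT S.T Y = ∑ i, S.gT S.T (e i) * S.gT (e i) Y := by
      intro Y
      conv_lhs => rw [hTexp]
      simp [Setup.gT, map_sum, LinearMap.sum_apply, map_smul, LinearMap.smul_apply,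
        smul_eq_mul]
    have hRtan : ∀ i, S.tanPr (S.Rcurv (S.ι (e i)) (S.ν H) (S.ι (e i)))
        = (algebraMap ℝ R ε * S.gN H S.eta) • S.T
          - (algebraMap ℝ R ε * (S.gN H S.eta * S.gT (e i) S.T)) • e i := by
      intro i
      have h1 : S.g (S.ν H) (S.ι (e i)) = 0 := g_ν_ι H (e i)
      have h2 : S.g (S.ν H) S.dt = S.gN H S.eta := g_ν_dt H
      have h3 : S.g (S.ι (e i)) S.dt = S.gT (e i) S.T := g_ι_dt (e i)
      have h4 : S.g (S.ι (e i)) (S.ι (e i)) = 1 := by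
        have h := he.1 i i
        simpa [Setup.gT] using h
      have h5 : S.tanPr S.dt = S.T := rfl
      unfold Setup.Rcurv prodCurv
      rw [h1, h2, h3, h4]
      simp only [map_smul, map_sub, map_add, S.tan_ι, S.tan_ν, h5]
      module
    have hRtan' : ∀ i Y, S.gT (S.tanPr (S.Rcurv (S.ι (e i)) (S.ν H) (S.ι (e i)))) Y
        = algebraMap ℝ R ε * S.gN H S.eta * S.gT S.T Y
          - algebraMap ℝ R ε * S.gN H S.eta * (S.gT (e i) S.T * S.gT (e i) Y) := by
      intro i Y
      rw [hRtan i]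
      simp only [Setup.gT, map_sub, map_smul, LinearMap.sub_apply, LinearMap.smul_apply,
        smul_eq_mul]
      ring
    have alg_cancel : ∀ (r : ℝ) (x : R), r ≠ 0 → algebraMap ℝ R r * x = 0 → x = 0 := by
      intro r x hr hx
      have h := congrArg (fun y => algebraMap ℝ R r⁻¹ * y) hx
      simpa [← mul_assoc, ← map_mul, inv_mul_cancel₀ hr] using h
    have key : ∀ Y, (algebraMap ℝ R ε * (((n:R) - 1) * S.gN H S.eta)) * S.gT S.T Y = 0 := by
      intro Y
      have hb := hbic Y
      rw [hHH Y, mul_zero, zero_add] at hb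
      have hs2 : (∑ i, S.gT (S.A (S.nconn (e i) H) (e i)) Y) = 0 :=
        Finset.sum_eq_zero (fun i _ => by rw [hpar]; simp [Setup.gT])
      have hsum3 : (∑ i, S.gT (S.tanPr (S.Rcurv (S.ι (e i)) (S.ν H) (S.ι (e i)))) Y)
          = (algebraMap ℝ R ε * (((n:R) - 1) * S.gN H S.eta)) * S.gT S.T Y := by
        rw [Finset.sum_congr rfl (fun i _ => hRtan' i Y), Finset.sum_sub_distrib,
          Finset.sum_const, Finset.card_univ, Fintype.card_fin, nsmul_eq_mul]
        have hsum : (∑ i, algebraMap ℝ R ε * S.gN H S.eta * (S.gT (e i) S.T * S.gT (e i) Y))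
            = algebraMap ℝ R ε * S.gN H S.eta * S.gT S.T Y := by
          rw [← Finset.mul_sum]
          congr 1
          rw [hTsum Y]
          exact Finset.sum_congr rfl (fun i _ => by rw [gT_symm (e i) S.T])
        rw [hsum]
        ring
      rw [hs2, mul_zero, zero_add, hsum3] at hb
      refine alg_cancel 4 _ (by norm_num) ?_
      rw [show (algebraMap ℝ R (4:ℝ)) = (4:R) from map_ofNat _ 4]
      exact hb
    have hc0 : algebraMap ℝ R ε * (((n:R) - 1) * S.gN H S.eta) = 0 := by
      apply hT
      rw [hTexp, Finset.smul_sum]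
      exact Finset.sum_eq_zero (fun i _ => by rw [smul_smul, key (e i), zero_smul])
    have hε0 : ε ≠ 0 := by rcases hε with h | h <;> rw [h] <;> norm_num
    have hnn : ((n:ℝ) - 1) ≠ 0 := by
      have h : (n:ℝ) ≠ 1 := by exact_mod_cast hn1
      exact sub_ne_zero_of_ne h
    have hη0 : S.gN H S.eta = 0 := by
      refine alg_cancel (ε * ((n:ℝ) - 1)) _ (mul_ne_zero hε0 hnn) ?_
      rw [map_mul, map_sub, map_one, map_natCast, mul_assoc]
      exact hc0
    have gN_zero_right : ∀ ζ : NM, S.gN ζ 0 = 0 := fun ζ => by simp [Setup.gN]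
    have hAHT_w : ∀ X, S.gT (S.A H S.T) X = 0 := by
      intro X
      have h1 : S.gN (S.nconn X S.eta) H = 0 := by
        have h2 := gN_metric X S.eta H
        rw [hpar, gN_zero_right, add_zero] at h2
        rw [← h2, gN_symm, hη0, act_zero]
      calc S.gT (S.A H S.T) X = S.gN (S.alpha S.T X) H := S.shape H S.T X
        _ = S.gN (S.alpha X S.T) H := by rw [S.alpha_symm]
        _ = S.gN (- S.nconn X S.eta) H := by rw [nconn_eta, neg_neg]
        _ = - S.gN (S.nconn X S.eta) H := by simp [Setup.gN]
        _ = 0 := by rw [h1, neg_zero]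
    have hAHT : S.A H S.T = 0 := by
      rw [he.2 (S.A H S.T)]
      exact Finset.sum_eq_zero (fun i _ => by rw [hAHT_w (e i), zero_smul])
    have halpha : ∀ X Y : TM, S.alpha X (S.A H Y) = S.alpha (S.A H X) Y := by
      intro X Y
      have hr := S.ricci (dt := S.dt) X Y H
      rw [hpar Y, hpar X, hpar (S.bracket X Y), nconn_zero X, nconn_zero Y] at hr
      have hcurv : S.norPr (prodCurv ε S.g S.dt (S.ι X) (S.ι Y) (S.ν H)) = 0 := by
        unfold prodCurv
        rw [S.g_tan_nor Y H, S.g_tan_nor X H, g_ν_dt H, hη0]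
        simp
      rw [hcurv] at hr
      have h2 : S.alpha X (S.A H Y) - S.alpha (S.A H X) Y = 0 := by
        simpa using hr.symm
      exact sub_eq_zero.mp h2
    have halphaT : ∀ X : TM, S.alpha S.T (S.A H X) = 0 := by
      intro X
      rw [halpha S.T X, hAHT]
      simp
    have hfin : S.A H (S.A ξ S.T) = 0 := by
      have hw : ∀ X, S.gT (S.A H (S.A ξ S.T)) X = 0 := by
        intro X
        calc S.gT (S.A H (S.A ξ S.T)) X
            = S.gN (S.alpha (S.A ξ S.T) X) H := S.shape H _ X
          _ = S.gN (S.alpha X (S.A ξ S.T)) H := by rw [S.alpha_symm]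
          _ = S.gT (S.A H X) (S.A ξ S.T) := (S.shape H X _).symm
          _ = S.gT (S.A ξ S.T) (S.A H X) := gT_symm _ _
          _ = S.gN (S.alpha S.T (S.A H X)) ξ := S.shape ξ S.T _
          _ = 0 := by rw [halphaT X]; simp [Setup.gN]
      rw [he.2 (S.A H (S.A ξ S.T))]
      exact Finset.sum_eq_zero (fun i _ => by rw [hw (e i), zero_smul])
    exact hE0 (S.A ξ S.T) hfin
end

section
/- If f : M^n → Q^{n+1}_ε × ℝ is a biconservative isometric immersion with nonzero parallel mean curvature vector field, then the kernel distribution E_0(H) = {X ∈ TM : A_H X = 0} is involutive. -/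
open scoped BigOperators

namespace Setup

section Aux

variable {ε : ℝ} {m : ℕ} {R TM NM AM : Type*} [CommRing R] [Algebra ℝ R]
  [AddCommGroup TM] [Module R TM] [AddCommGroup NM] [Module R NM]
  [AddCommGroup AM] [Module R AM]

variable (S : Setup ε m R TM NM AM)

lemma act_zero (X : TM) : S.act X 0 = 0 := by
  simpa using S.act_const X 0

lemma nconn_zero (X : TM) : S.nconn X (0 : NM) = 0 := by
  have h := S.nconn_smul X (0 : R) (0 : NM)
  simpa [S.act_zero] using h

lemma g_nor_tan (ξ : NM) (X : TM) : S.g (S.ν ξ) (S.ι X) = 0 := by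
  rw [S.g_symm]; exact S.g_tan_nor X ξ

lemma dt_eq : S.dt = S.ι S.T + S.ν S.eta := (S.split S.dt).symm

lemma g_ι_dt (X : TM) : S.g (S.ι X) S.dt = S.gT X S.T := by
  conv_lhs => rw [S.dt_eq]
  simp [Setup.gT, S.g_tan_nor]

lemma g_dt_ι (X : TM) : S.g S.dt (S.ι X) = S.gT X S.T := by
  rw [S.g_symm]; exact S.g_ι_dt X

lemma g_ν_dt (ξ : NM) : S.g (S.ν ξ) S.dt = S.gN ξ S.eta := by
  conv_lhs => rw [S.dt_eq]
  simp [Setup.gN, S.g_nor_tan]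

lemma g_dt_ν (ξ : NM) : S.g S.dt (S.ν ξ) = S.gN ξ S.eta := by
  rw [S.g_symm]; exact S.g_ν_dt ξ

lemma gT_symm (X Y : TM) : S.gT X Y = S.gT Y X := S.g_symm _ _

lemma gN_symm (ξ ζ : NM) : S.gN ξ ζ = S.gN ζ ξ := S.g_symm _ _

@[simp] lemma gT_zero_left (Y : TM) : S.gT 0 Y = 0 := by simp [Setup.gT]

@[simp] lemma gT_zero_right (Y : TM) : S.gT Y 0 = 0 := by simp [Setup.gT]

@[simp] lemma gN_zero_left (ζ : NM) : S.gN 0 ζ = 0 := by simp [Setup.gN]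

@[simp] lemma gN_zero_right (ζ : NM) : S.gN ζ 0 = 0 := by simp [Setup.gN]

lemma gT_sum_left {α : Type*} (s : Finset α) (f : α → TM) (Z : TM) :
    S.gT (∑ i ∈ s, f i) Z = ∑ i ∈ s, S.gT (f i) Z := by
  simp [Setup.gT]

lemma Rcurv_def (Z W V : AM) : S.Rcurv Z W V = prodCurv ε S.g S.dt Z W V := rfl

lemma gT_sub_left (X Y Z : TM) : S.gT (X - Y) Z = S.gT X Z - S.gT Y Z := by
  simp [Setup.gT]

lemma gT_smul_left (a : R) (X Z : TM) : S.gT (a • X) Z = a * S.gT X Z := by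
  simp [Setup.gT]

lemma gN_sub_left (ξ ζ η' : NM) : S.gN (ξ - ζ) η' = S.gN ξ η' - S.gN ζ η' := by
  simp [Setup.gN]

lemma gN_add_left (ξ ζ η' : NM) : S.gN (ξ + ζ) η' = S.gN ξ η' + S.gN ζ η' := by
  simp [Setup.gN]

lemma gN_smul_left (a : R) (ξ η' : NM) : S.gN (a • ξ) η' = a * S.gN ξ η' := by
  simp [Setup.gN]

lemma act_gN (X : TM) (ξ ζ : NM) :
    S.act X (S.gN ξ ζ) = S.gN (S.nconn X ξ) ζ + S.gN ξ (S.nconn X ζ) := by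
  have h := S.metric X (S.ν ξ) (S.ν ζ)
  rw [S.weingarten, S.weingarten] at h
  simpa [Setup.gN, S.g_tan_nor, S.g_nor_tan] using h

lemma gN_alpha (ξ : NM) (X Y : TM) :
    S.gN (S.alpha X Y) ξ = S.gT (S.A ξ X) Y := by
  simpa [Setup.gT, Setup.gN] using (S.shape ξ X Y).symm

@[simp] lemma tanPr_dt : S.tanPr S.dt = S.T := rfl

@[simp] lemma norPr_dt : S.norPr S.dt = S.eta := rfl

@[simp] lemma g_ι_ι (X Y : TM) : S.g (S.ι X) (S.ι Y) = S.gT X Y := rfl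

lemma norPr_curv_tan (X Y Z : TM) :
    S.norPr (prodCurv ε S.g S.dt (S.ι X) (S.ι Y) (S.ι Z))
      = (algebraMap ℝ R ε *
          ((S.gT X Z - S.gT X S.T * S.gT Z S.T) * S.gT Y S.T
            - (S.gT Y Z - S.gT Y S.T * S.gT Z S.T) * S.gT X S.T)) • S.eta := by
  unfold prodCurv
  simp only [map_smul, map_sub, S.nor_ι, S.norPr_dt, S.g_ι_dt, S.g_ι_ι]
  module

lemma tanPr_curv_mixed (X Z : TM) (ξ : NM) :
    S.tanPr (prodCurv ε S.g S.dt (S.ι X) (S.ν ξ) (S.ι Z))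
      = (algebraMap ℝ R ε * (S.gN ξ S.eta * S.gT X Z)) • S.T
        - (algebraMap ℝ R ε * (S.gN ξ S.eta * S.gT Z S.T)) • X := by
  unfold prodCurv
  simp only [map_smul, map_sub, S.tan_ι, S.tan_ν, S.tanPr_dt, S.g_ι_dt, S.g_ν_dt,
    S.g_nor_tan, S.g_ι_ι]
  module

end Aux

end Setup

/-- For a biconservative isometric immersion `f : M^n → Q^{n+1}_ε × ℝ` with
nonzero parallel mean curvature, the distribution `E_0(H) = ker A_H` is
involutive. -/
theorem stmt_11 {ε : ℝ} (hε : ε = 1 ∨ ε = -1) {n : ℕ} {R TM NM AM : Type*}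
    [CommRing R] [Algebra ℝ R] [AddCommGroup TM] [Module R TM]
    [AddCommGroup NM] [Module R NM] [AddCommGroup AM] [Module R AM]
    (S : Setup ε n R TM NM AM)
    (e : Fin n → TM) (H : NM) (he : S.IsONFrame e) (hH : S.IsMeanCurv e H)
    (hpar : S.IsParallelN H) (hH0 : H ≠ 0)
    (hbic : S.Biconservative e H)
    (ξ₁ ξ₂ : NM) (nH nE : R) (hu1 : S.gN ξ₁ ξ₁ = 1) (hH1 : H = nH • ξ₁)
    (hu2 : S.gN ξ₂ ξ₂ = 1) (hetadec : S.eta = nE • ξ₂)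
    (hspan : ∀ ζ : NM, ∃ r s : R, ζ = r • ξ₁ + s • ξ₂) :
    ∀ X Y : TM, S.A H X = 0 → S.A H Y = 0 → S.A H (S.bracket X Y) = 0 := by
  intro X Y hX hY
  have hbrk : S.bracket X Y = S.conn X Y - S.conn Y X := (S.torsion X Y).symm
  -- normal connection is metric, `H` parallel
  have hnc : ∀ (X' : TM) (ξ : NM), S.gN (S.nconn X' ξ) H = S.act X' (S.gN ξ H) := by
    intro X' ξ
    have h := S.act_gN X' ξ H
    rw [hpar X'] at h
    simpa using h.symm
  -- the key pairing formula, valid in general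
  have key : ∀ Z : TM, S.gT (S.A H (S.bracket X Y)) Z
      = -(algebraMap ℝ R ε *
          ((S.gT X Z - S.gT X S.T * S.gT Z S.T) * S.gT Y S.T
            - (S.gT Y Z - S.gT Y S.T * S.gT Z S.T) * S.gT X S.T) * S.gN S.eta H) := by
    intro Z
    have hcod := S.codazzi (dt := S.dt) X Y Z
    have halpha : S.alpha (S.bracket X Y) Z
        = (S.nconn X (S.alpha Y Z) - S.alpha Y (S.conn X Z))
          - (S.nconn Y (S.alpha X Z) - S.alpha X (S.conn Y Z))
          - S.norPr (prodCurv ε S.g S.dt (S.ι X) (S.ι Y) (S.ι Z)) := by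
      rw [hbrk, map_sub, LinearMap.sub_apply, ← hcod]
      abel
    rw [← S.gN_alpha, halpha, S.norPr_curv_tan]
    rw [S.gN_sub_left, S.gN_sub_left, S.gN_sub_left, S.gN_sub_left, S.gN_smul_left]
    rw [hnc X (S.alpha Y Z), hnc Y (S.alpha X Z)]
    rw [S.gN_alpha, S.gN_alpha, S.gN_alpha, S.gN_alpha, hX, hY]
    simp [S.act_zero]
  -- expand in the orthonormal frame
  rw [he.2 (S.A H (S.bracket X Y))]
  apply Finset.sum_eq_zero
  intro i _
  rw [key (e i)]
  rcases lt_or_ge n 2 with hn | hn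
  · -- low dimensions
    interval_cases n
    · exact i.elim0
    · -- n = 1
      have h0 : i = 0 := Subsingleton.elim i 0
      subst h0
      have hxX : S.gT X S.T = S.gT X (e 0) * S.gT (e 0) S.T := by
        conv_lhs => rw [he.2 X]
        simp [Fin.sum_univ_one, S.gT_smul_left]
      have hxY : S.gT Y S.T = S.gT Y (e 0) * S.gT (e 0) S.T := by
        conv_lhs => rw [he.2 Y]
        simp [Fin.sum_univ_one, S.gT_smul_left]
      have hz : ((S.gT X (e 0) - S.gT X S.T * S.gT (e 0) S.T) * S.gT Y S.T
          - (S.gT Y (e 0) - S.gT Y S.T * S.gT (e 0) S.T) * S.gT X S.T) = 0 := by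
        rw [hxX, hxY]; ring
      rw [show ((S.gT X (e 0) - S.gT X S.T * S.gT (e 0) S.T) * S.gT Y S.T
          - (S.gT Y (e 0) - S.gT Y S.T * S.gT (e 0) S.T) * S.gT X S.T) = 0 from hz]
      simp
  · -- n ≥ 2 : use biconservativity to kill the curvature term
    -- step 1: the trace identity coming from `hbic`
    have hQ : ∀ W : TM,
        (4 * (algebraMap ℝ R ε * ((n : R) - 1))) * (S.gN H S.eta * S.gT S.T W) = 0 := by
      intro W
      have hb := hbic W
      have h1 : S.act W (S.gN H H) = 0 := by
        have h := S.act_gN W H H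
        rw [hpar W] at h
        simpa using h
      have h2 : ∀ j, S.gT (S.A (S.nconn (e j) H) (e j)) W = 0 := by
        intro j
        rw [hpar (e j)]
        simp
      have h3 : ∀ j, S.gT (S.tanPr (S.Rcurv (S.ι (e j)) (S.ν H) (S.ι (e j)))) W
          = algebraMap ℝ R ε * S.gN H S.eta * S.gT S.T W
            - algebraMap ℝ R ε * S.gN H S.eta * (S.gT (e j) S.T * S.gT (e j) W) := by
        intro j
        rw [S.Rcurv_def, S.tanPr_curv_mixed]
        rw [S.gT_sub_left, S.gT_smul_left, S.gT_smul_left]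
        have hjj : S.gT (e j) (e j) = 1 := by simpa using he.1 j j
        rw [hjj]
        ring
      have hsum : ∑ j, S.gT (e j) S.T * S.gT (e j) W = S.gT S.T W := by
        have hT := he.2 S.T
        calc ∑ j, S.gT (e j) S.T * S.gT (e j) W
            = ∑ j, S.gT (S.gT S.T (e j) • e j) W := by
              refine Finset.sum_congr rfl fun j _ => ?_
              rw [S.gT_smul_left, S.gT_symm (e j) S.T]
          _ = S.gT (∑ j, S.gT S.T (e j) • e j) W := (S.gT_sum_left _ _ _).symm
          _ = S.gT S.T W := by rw [← hT]
      have h3' : ∑ j, S.gT (S.tanPr (S.Rcurv (S.ι (e j)) (S.ν H) (S.ι (e j)))) W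
          = (n : R) * (algebraMap ℝ R ε * S.gN H S.eta * S.gT S.T W)
            - algebraMap ℝ R ε * S.gN H S.eta * S.gT S.T W := by
        rw [Finset.sum_congr rfl fun j _ => h3 j, Finset.sum_sub_distrib,
          Finset.sum_const, Finset.card_univ, Fintype.card_fin, ← Finset.mul_sum, hsum]
        simp [nsmul_eq_mul]
      rw [h1, Finset.sum_congr rfl (fun j _ => h2 j), Finset.sum_const, h3'] at hb
      simp only [smul_zero, mul_zero, add_zero, zero_add, mul_zero] at hb
      linear_combination hb
    -- step 2: invert the constant `4 ε (n-1)`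
    have hK : ∀ W : TM, S.gN S.eta H * S.gT W S.T = 0 := by
      intro W
      have hn1 : ((n : ℝ) - 1) ≠ 0 := by
        have h2n : (2 : ℝ) ≤ (n : ℝ) := by exact_mod_cast hn
        linarith
      have hε2 : ε * ε = 1 := by rcases hε with h | h <;> rw [h] <;> norm_num
      have hreal : (ε / (4 * ((n : ℝ) - 1))) * (4 * (ε * ((n : ℝ) - 1))) = 1 := by
        field_simp
        linear_combination hε2
      have hcast : (4 : R) * (algebraMap ℝ R ε * ((n : R) - 1))
          = algebraMap ℝ R (4 * (ε * ((n : ℝ) - 1))) := by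
        rw [map_mul, map_mul, map_sub, map_one, map_ofNat, map_natCast]
      have hral : (algebraMap ℝ R (ε / (4 * ((n : ℝ) - 1))))
          * (4 * (algebraMap ℝ R ε * ((n : R) - 1))) = 1 := by
        rw [hcast, ← map_mul, hreal, map_one]
      calc S.gN S.eta H * S.gT W S.T
          = S.gN H S.eta * S.gT S.T W := by rw [S.gN_symm, S.gT_symm]
        _ = ((algebraMap ℝ R (ε / (4 * ((n : ℝ) - 1))))
              * (4 * (algebraMap ℝ R ε * ((n : R) - 1))))
            * (S.gN H S.eta * S.gT S.T W) := by rw [hral, one_mul]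
        _ = (algebraMap ℝ R (ε / (4 * ((n : ℝ) - 1))))
            * ((4 * (algebraMap ℝ R ε * ((n : R) - 1)))
              * (S.gN H S.eta * S.gT S.T W)) := by ring
        _ = 0 := by rw [hQ W, mul_zero]
    have hz : -(algebraMap ℝ R ε *
          ((S.gT X (e i) - S.gT X S.T * S.gT (e i) S.T) * S.gT Y S.T
            - (S.gT Y (e i) - S.gT Y S.T * S.gT (e i) S.T) * S.gT X S.T)
          * S.gN S.eta H) = 0 := by
      have k1 := hK X
      have k2 := hK Y
      linear_combination (algebraMap ℝ R ε
          * (S.gT Y (e i) - S.gT Y S.T * S.gT (e i) S.T)) * k1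
        - (algebraMap ℝ R ε
          * (S.gT X (e i) - S.gT X S.T * S.gT (e i) S.T)) * k2
    rw [hz, zero_smul]
end
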